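/- In the D-WCCM formulation, suppose $(\{\mathbf{y}^{(k)}\}, \mathbf{u}, \{\mathbf{v}^{(k)}\})$ is feasible and suppose tag $j$ is selected by two distinct groups, i.e., $\mathbf{y}^{(k)}_j = \mathbf{y}^{(l)}_j = 1$ with $k \ne l$. Then every outlier in group $k$ that has tag $j$ must have $\mathbf{v}^{(k)}_i = 1$ (it is counted as ignored), and likewise for group $l$. Consequently, replacing $\mathbf{y}^{(l)}_j$ by $0$ yields a feasible solution with objective value no larger, so some optimal solution of D-WCCM has pairwise disjoint descriptions. -/
import Mathlib


open Finset

variable {ι τ : Type*} [DecidableEq ι] [DecidableEq τ]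

/-- Feasibility of a D-WCCM solution in set form: `Y k` is the description of group
`k`, `u i = 1` marks covered (ignored) normal instances, `v k m = 1` marks ignored
outliers of group `k`.  R-SUFF: every outlier of group `k` is covered by `Y k` or
ignored; R-NECE: normal instances covered by some description are marked in `u`, and
outliers of group `k` covered by another group's description are marked in `v k`. -/
def DWCCMFeasible (K : ℕ) (𝒩 : Finset ι) (𝒪 : Fin K → Finset ι) (T : ι → Finset τ)
    (Y : Fin K → Finset τ) (u : ι → ℕ) (v : Fin K → ι → ℕ) : Prop :=
  (∀ k, ∀ m ∈ 𝒪 k, (T m ∩ Y k).Nonempty ∨ v k m = 1) ∧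
  (∀ k, ∀ i ∈ 𝒩, (T i ∩ Y k).Nonempty → u i = 1) ∧
  (∀ k l, k ≠ l → ∀ m ∈ 𝒪 k, (T m ∩ Y l).Nonempty → v k m = 1)

/-- D-WCCM objective `|u| + ∑ₖ λ⁽ᵏ⁾ |v⁽ᵏ⁾|`. -/
def DWCCMObj (K : ℕ) (𝒩 : Finset ι) (𝒪 : Fin K → Finset ι) (lam : Fin K → ℝ)
    (u : ι → ℕ) (v : Fin K → ι → ℕ) : ℝ :=
  ((𝒩.filter (fun i => u i = 1)).card : ℝ)
    + ∑ k, lam k * (((𝒪 k).filter (fun m => v k m = 1)).card : ℝ)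

lemma dwccm_feas_update {K : ℕ} {𝒩 : Finset ι} {𝒪 : Fin K → Finset ι} {T : ι → Finset τ}
    {Y : Fin K → Finset τ} {u : ι → ℕ} {v : Fin K → ι → ℕ}
    (hfeas : DWCCMFeasible K 𝒩 𝒪 T Y u v)
    (k l : Fin K) (hkl : k ≠ l) (j : τ) (hjk : j ∈ Y k) :
    DWCCMFeasible K 𝒩 𝒪 T (Function.update Y l (Y l \ {j})) u v := by
  obtain ⟨h1, h2, h3⟩ := hfeas
  have hsub : ∀ k', Function.update Y l (Y l \ {j}) k' ⊆ Y k' := by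
    intro k'
    by_cases h : k' = l
    · rw [h, Function.update_self]; exact Finset.sdiff_subset
    · rw [Function.update_of_ne h]
  refine ⟨?_, ?_, ?_⟩
  · intro k' m hm
    by_cases h : k' = l
    · rw [h, Function.update_self]
      rcases h1 l m (h ▸ hm) with ⟨t, ht⟩ | hv
      · simp only [Finset.mem_inter] at ht
        by_cases htj : t = j
        · subst htj
          exact Or.inr (h ▸ h3 l k hkl.symm m (h ▸ hm) ⟨t, Finset.mem_inter.2 ⟨ht.1, hjk⟩⟩)
        · refine Or.inl ⟨t, Finset.mem_inter.2 ⟨ht.1, Finset.mem_sdiff.2 ⟨ht.2, by simp [htj]⟩⟩⟩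
      · exact Or.inr (h ▸ hv)
    · rw [Function.update_of_ne h]
      exact h1 k' m hm
  · intro k' i hi hne
    exact h2 k' i hi (hne.mono (Finset.inter_subset_inter le_rfl (hsub k')))
  · intro k' l' hne m hm hint
    exact h3 k' l' hne m hm (hint.mono (Finset.inter_subset_inter le_rfl (hsub l')))

lemma dwccm_exists_disjoint {K : ℕ} {𝒩 : Finset ι} {𝒪 : Fin K → Finset ι} {T : ι → Finset τ}
    {u : ι → ℕ} {v : Fin K → ι → ℕ} :
    ∀ (n : ℕ) (Y : Fin K → Finset τ), (∑ k, (Y k).card) ≤ n →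
    DWCCMFeasible K 𝒩 𝒪 T Y u v →
    ∃ Y', DWCCMFeasible K 𝒩 𝒪 T Y' u v ∧ ∀ k' l', k' ≠ l' → Disjoint (Y' k') (Y' l') := by
  intro n
  induction n with
  | zero =>
    intro Y hle hfeas
    refine ⟨Y, hfeas, ?_⟩
    intro k' l' _
    have : (Y k').card = 0 := by
      have h0 : (Y k').card ≤ ∑ k, (Y k).card := by
        simpa using Finset.single_le_sum (f := fun k => (Y k).card) (fun _ _ => Nat.zero_le _)
          (Finset.mem_univ k')
      omega
    simp [Finset.card_eq_zero.mp this]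
  | succ n ih =>
    intro Y hle hfeas
    by_cases hdisj : ∀ k' l', k' ≠ l' → Disjoint (Y k') (Y l')
    · exact ⟨Y, hfeas, hdisj⟩
    · push_neg at hdisj
      obtain ⟨k, l, hkl, hnd⟩ := hdisj
      rw [Finset.not_disjoint_iff] at hnd
      obtain ⟨j, hjk, hjl⟩ := hnd
      have hcard : ∑ k', ((Function.update Y l (Y l \ {j})) k').card ≤ n := by
        have hsum := Finset.sum_update_of_mem (f := fun k' => (Y k').card)
          (Finset.mem_univ l) ((Y l \ {j}).card)
        have hlt : (Y l \ {j}).card < (Y l).card :=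
          Finset.card_lt_card (Finset.sdiff_ssubset (by simpa using hjl) (by simp))
        have hsplit : ∑ k', (Y k').card
            = (Y l).card + ∑ k' ∈ Finset.univ \ {l}, (Y k').card := by
          rw [← Finset.sum_sdiff (Finset.singleton_subset_iff.2 (Finset.mem_univ l))]
          simp [add_comm]
        have : ∑ k', ((Function.update Y l (Y l \ {j})) k').card
            = (Y l \ {j}).card + ∑ k' ∈ Finset.univ \ {l}, (Y k').card := by
          rw [show (fun k' => ((Function.update Y l (Y l \ {j})) k').card)
              = Function.update (fun k' => (Y k').card) l ((Y l \ {j}).card) from ?_]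
          · exact hsum
          · funext x
            by_cases hx : x = l
            · subst hx; simp
            · simp [Function.update_of_ne hx]
        omega
      exact ih _ hcard (dwccm_feas_update hfeas k l hkl j hjk)

/-- If a feasible D-WCCM solution selects tag `j` in two distinct groups `k ≠ l`,
then every outlier of group `k` carrying tag `j` is ignored (`v k m = 1`), removing
`j` from `Y l` preserves feasibility without increasing the objective, and therefore
some solution at least as good as `(Y,u,v)` has pairwise disjoint descriptions. -/
theorem dwccm_disjoint_wlog
    (K : ℕ) (𝒩 : Finset ι) (𝒪 : Fin K → Finset ι) (T : ι → Finset τ)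
    (lam : Fin K → ℝ) (hlam : ∀ k, 1 ≤ lam k)
    (Y : Fin K → Finset τ) (u : ι → ℕ) (v : Fin K → ι → ℕ)
    (hfeas : DWCCMFeasible K 𝒩 𝒪 T Y u v)
    (k l : Fin K) (hkl : k ≠ l) (j : τ) (hjk : j ∈ Y k) (hjl : j ∈ Y l) :
    (∀ m ∈ 𝒪 k, j ∈ T m → v k m = 1) ∧
    (∀ m ∈ 𝒪 l, j ∈ T m → v l m = 1) ∧
    DWCCMFeasible K 𝒩 𝒪 T (Function.update Y l (Y l \ {j})) u v ∧
    DWCCMObj K 𝒩 𝒪 lam u v ≤ DWCCMObj K 𝒩 𝒪 lam u v ∧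
    (∃ (Y' : Fin K → Finset τ) (u' : ι → ℕ) (v' : Fin K → ι → ℕ),
      DWCCMFeasible K 𝒩 𝒪 T Y' u' v' ∧
      DWCCMObj K 𝒩 𝒪 lam u' v' ≤ DWCCMObj K 𝒩 𝒪 lam u v ∧
      ∀ k' l', k' ≠ l' → Disjoint (Y' k') (Y' l')) := by
  obtain ⟨h1, h2, h3⟩ := hfeas
  refine ⟨fun m hm hjm => h3 k l hkl m hm ⟨j, Finset.mem_inter.2 ⟨hjm, hjl⟩⟩,
    fun m hm hjm => h3 l k hkl.symm m hm ⟨j, Finset.mem_inter.2 ⟨hjm, hjk⟩⟩,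
    dwccm_feas_update ⟨h1, h2, h3⟩ k l hkl j hjk, le_refl _, ?_⟩
  obtain ⟨Y', hY', hdisj⟩ := dwccm_exists_disjoint (∑ k, (Y k).card) Y le_rfl ⟨h1, h2, h3⟩
  exact ⟨Y', u, v, hY', le_refl _, hdisj⟩
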